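/- If a metric space X has the property that for every r > 0 there is a uniformly bounded cover 𝒰 of X that can be written as a countable union 𝒰 = ⋃_{i=1}^∞ 𝒰_i of r-disjoint families 𝒰_i, then X is large scale weakly paracompact. -/

import Mathlib

/-- `𝒰` is a cover of `X`. -/
def IsCover {X : Type*} (𝒰 : Set (Set X)) : Prop := ∀ x : X, ∃ U ∈ 𝒰, x ∈ U

/-- `𝒰` is uniformly bounded: there is `M > 0` bounding the diameters of all members. -/
def UnifBounded {X : Type*} [MetricSpace X] (𝒰 : Set (Set X)) : Prop :=
  ∃ M : ℝ, 0 < M ∧ ∀ U ∈ 𝒰, EMetric.diam U ≤ ENNReal.ofReal M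

/-- The Lebesgue number of `𝒰` is at least `s`: every ball `B(x,s)` is contained in some
member of `𝒰`. -/
def LebesgueAtLeast {X : Type*} [MetricSpace X] (s : ℝ) (𝒰 : Set (Set X)) : Prop :=
  ∀ x : X, ∃ U ∈ 𝒰, Metric.ball x s ⊆ U

/-- A family of subsets is `R`-disjoint if distinct members are at distance `> R`. -/
def RDisjointFam {X : Type*} [MetricSpace X] (R : ℝ) (𝒲 : Set (Set X)) : Prop :=
  ∀ U ∈ 𝒲, ∀ V ∈ 𝒲, U ≠ V → ∀ x ∈ U, ∀ y ∈ V, R < dist x y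

/-- `X` is large scale weakly paracompact. -/
def LSWeaklyParacompact (X : Type*) [MetricSpace X] : Prop :=
  ∀ r > (0:ℝ), ∀ s > (0:ℝ), ∃ 𝒰 : Set (Set X), IsCover 𝒰 ∧ UnifBounded 𝒰 ∧
    LebesgueAtLeast s 𝒰 ∧ ∀ x : X, {U ∈ 𝒰 | Metric.ball x r ⊆ U}.Finite

/-- Proposition 3.3. If for every `r > 0` there is a uniformly bounded
cover of `X` that is a countable union of `r`-disjoint families, then `X` is large scale
weakly paracompact. -/
theorem stmt2 {X : Type*} [MetricSpace X]
    (h : ∀ r > (0:ℝ), ∃ 𝒰 : ℕ → Set (Set X), IsCover (⋃ i, 𝒰 i) ∧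
      UnifBounded (⋃ i, 𝒰 i) ∧ ∀ i, RDisjointFam r (𝒰 i)) :
    LSWeaklyParacompact X := by
  intro r hr s hs
  obtain ⟨𝒰, hcov, ⟨M, hM, hbd⟩, hdisj⟩ := h (4*s) (by linarith)
  -- the expanded-and-trimmed sets
  set T : ℕ → Set X → Set X := fun i U =>
    Metric.thickening (2*s) U \ ⋃ j < i, ⋃ V ∈ 𝒰 j, V with hTdef
  -- key uniqueness: x can lie in the 2s-thickening of at most one member of 𝒰 i
  have huniq : ∀ (i : ℕ) (U V : Set X), U ∈ 𝒰 i → V ∈ 𝒰 i →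
      ∀ x : X, x ∈ Metric.thickening (2*s) U → x ∈ Metric.thickening (2*s) V → U = V := by
    intro i U V hU hV x hxU hxV
    by_contra hne
    obtain ⟨zU, hzU, hdU⟩ := Metric.mem_thickening_iff.1 hxU
    obtain ⟨zV, hzV, hdV⟩ := Metric.mem_thickening_iff.1 hxV
    have := hdisj i U hU V hV hne zU hzU zV hzV
    have : dist zU zV ≤ dist zU x + dist x zV := dist_triangle _ _ _
    have hx : dist zU x = dist x zU := dist_comm _ _
    linarith [hdisj i U hU V hV hne zU hzU zV hzV, dist_triangle zU x zV,
      dist_comm zU x]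
  -- Lebesgue-number property (which also gives the covering property)
  have hleb : ∀ x : X, ∃ i, ∃ U ∈ 𝒰 i, Metric.ball x s ⊆ T i U := by
    intro x
    have hex : ∃ i, ∃ U ∈ 𝒰 i, x ∈ Metric.thickening s U := by
      obtain ⟨U, hU, hxU⟩ := hcov x
      obtain ⟨i, hUi⟩ := Set.mem_iUnion.1 hU
      exact ⟨i, U, hUi, Metric.self_subset_thickening hs U hxU⟩
    classical
    obtain ⟨U, hU, hxU⟩ := Nat.find_spec hex
    refine ⟨Nat.find hex, U, hU, ?_⟩
    intro y hy
    have hyx : dist y x < s := Metric.mem_ball.1 hy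
    constructor
    · obtain ⟨z, hz, hdz⟩ := Metric.mem_thickening_iff.1 hxU
      exact Metric.mem_thickening_iff.2 ⟨z, hz, by
        have := dist_triangle y x z; linarith⟩
    · intro hmem
      simp only [Set.mem_iUnion] at hmem
      obtain ⟨j, hj, V, hV, hyV⟩ := hmem
      have : x ∈ Metric.thickening s V :=
        Metric.mem_thickening_iff.2 ⟨y, hyV, by rw [dist_comm]; exact hyx⟩
      exact absurd ⟨V, hV, this⟩ (Nat.find_min hex hj)
  refine ⟨{W | ∃ i, ∃ U ∈ 𝒰 i, W = T i U}, ?_, ?_, ?_, ?_⟩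
  · -- cover
    intro x
    obtain ⟨i, U, hU, hball⟩ := hleb x
    exact ⟨T i U, ⟨i, U, hU, rfl⟩, hball (Metric.mem_ball_self hs)⟩
  · -- uniformly bounded
    refine ⟨M + 4*s, by linarith, ?_⟩
    rintro W ⟨i, U, hU, rfl⟩
    have h1 : T i U ⊆ Metric.cthickening (2*s) U :=
      Set.diff_subset.trans (Metric.thickening_subset_cthickening _ _)
    have h2 : EMetric.diam (Metric.cthickening (2*s) U) ≤
        EMetric.diam U + 2 * ENNReal.ofReal (2*s) := by
      have := Metric.ediam_cthickening_le (s := U) (⟨2*s, by positivity⟩ : NNReal)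
      convert this using 3
      · rfl
      · rfl
      · exact ENNReal.ofReal_eq_coe_nnreal _
    calc EMetric.diam (T i U) ≤ EMetric.diam (Metric.cthickening (2*s) U) :=
          EMetric.diam_mono h1
      _ ≤ EMetric.diam U + 2 * ENNReal.ofReal (2*s) := h2
      _ ≤ ENNReal.ofReal M + 2 * ENNReal.ofReal (2*s) := by
          gcongr; exact hbd U (Set.mem_iUnion.2 ⟨i, hU⟩)
      _ = ENNReal.ofReal (M + 4*s) := by
          rw [← ENNReal.ofReal_ofNat, ← ENNReal.ofReal_mul (by norm_num),
            ← ENNReal.ofReal_add (le_of_lt hM) (by positivity)]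
          ring_nf
  · -- Lebesgue number at least s
    intro x
    obtain ⟨i, U, hU, hball⟩ := hleb x
    exact ⟨T i U, ⟨i, U, hU, rfl⟩, hball⟩
  · -- point-finiteness for balls of radius r
    intro x
    obtain ⟨U₀, hU₀, hxU₀⟩ := hcov x
    obtain ⟨i₀, hU₀i⟩ := Set.mem_iUnion.1 hU₀
    have hsub : {W ∈ {W | ∃ i, ∃ U ∈ 𝒰 i, W = T i U} | Metric.ball x r ⊆ W} ⊆
        ⋃ i ∈ Set.Iic i₀, {W | ∃ U ∈ 𝒰 i, W = T i U ∧ x ∈ W} := by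
      rintro W ⟨⟨i, U, hU, rfl⟩, hball⟩
      have hxW : x ∈ T i U := hball (Metric.mem_ball_self hr)
      have hile : i ≤ i₀ := by
        by_contra hgt
        push_neg at hgt
        exact hxW.2 (Set.mem_iUnion.2 ⟨i₀, Set.mem_iUnion.2 ⟨hgt,
          Set.mem_iUnion.2 ⟨U₀, Set.mem_iUnion.2 ⟨hU₀i, hxU₀⟩⟩⟩⟩)
      exact Set.mem_biUnion hile ⟨U, hU, rfl, hxW⟩
    refine Set.Finite.subset (Set.Finite.biUnion (Set.finite_Iic i₀) ?_) hsub
    intro i _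
    apply Set.Subsingleton.finite
    rintro W₁ ⟨U₁, hU₁, rfl, hx₁⟩ W₂ ⟨U₂, hU₂, rfl, hx₂⟩
    rw [huniq i U₁ U₂ hU₁ hU₂ x hx₁.1 hx₂.1]
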